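/- In the proof of the block-matrix construction: let A, B be n×m integer matrices, C an invertible m×m integer matrix, D an m×m integer matrix with at most one nonzero entry (equal to 1 or −1) in each row, and E = [[A, B], [CD, C]]. For a vector X = (Y, Z) ∈ ℚ^{2m} with Y, Z ∈ ℚ^m, one has EX = 0 if and only if (A − BD)Y = 0 and Z = −DY; moreover X is an elementary integral vector of the null space of E if and only if Y is an elementary integral vector of the null space of A − BD, and in that case the entries of X lie in {−1,0,1} if and only if the entries of Y lie in {−1,0,1}. -/

import Mathlib

noncomputable section

/-- `x` is an elementary integral vector of the set `V ⊆ ℚ^ι`: a nonzero element of `V`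
whose support is minimal w.r.t. inclusion among supports of nonzero elements of `V`, and
whose coordinates are relatively prime integers. -/
def IsElemIntVec {ι : Type*} [Fintype ι] (V : Set (ι → ℚ)) (x : ι → ℚ) : Prop :=
  x ∈ V ∧ x ≠ 0 ∧
    (∀ y ∈ V, y ≠ 0 → {i | y i ≠ 0} ⊆ {i | x i ≠ 0} → {i | y i ≠ 0} = {i | x i ≠ 0}) ∧
    ∃ c : ι → ℤ, (∀ i, (c i : ℚ) = x i) ∧ Finset.univ.gcd c = 1

/-- The block matrix `E = [[A, B], [CD, C]]`, over `ℚ`. -/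
def blockE {n m : ℕ} (A B : Matrix (Fin n) (Fin m) ℤ) (C D : Matrix (Fin m) (Fin m) ℤ) :
    Matrix (Fin n ⊕ Fin m) (Fin m ⊕ Fin m) ℚ :=
  (Matrix.fromBlocks A B (C * D) C).map fun z : ℤ => (z : ℚ)

/-- The matrix `A - BD`, over `ℚ`. -/
def redM {n m : ℕ} (A B : Matrix (Fin n) (Fin m) ℤ) (D : Matrix (Fin m) (Fin m) ℤ) :
    Matrix (Fin n) (Fin m) ℚ :=
  (A - B * D).map fun z : ℤ => (z : ℚ)

open Matrix

private lemma gcd1 {ι : Type*} [Fintype ι] {c : ι → ℤ} (h : Finset.univ.gcd c ∣ 1) :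
    Finset.univ.gcd c = 1 := by
  rw [← Finset.normalize_gcd]
  exact normalize_eq_one.mpr (isUnit_of_dvd_one h)

private lemma Dapply {m : ℕ} (D : Matrix (Fin m) (Fin m) ℤ)
    (hD : ∀ i : Fin m, (∀ j, D i j = 0) ∨
      ∃ j, (D i j = 1 ∨ D i j = -1) ∧ ∀ k, k ≠ j → D i k = 0) (i : Fin m) :
    (∀ Y : Fin m → ℚ, ((D.map fun z : ℤ => (z : ℚ)).mulVec Y) i = 0) ∨
    ∃ j, (∀ Y : Fin m → ℚ, ((D.map fun z : ℤ => (z : ℚ)).mulVec Y) i = Y j) ∨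
         (∀ Y : Fin m → ℚ, ((D.map fun z : ℤ => (z : ℚ)).mulVec Y) i = -Y j) := by
  rcases hD i with h | ⟨j, hj, hk⟩
  · left; intro Y
    simp [Matrix.mulVec, dotProduct, Matrix.map_apply, h]
  · right; refine ⟨j, ?_⟩
    have key : ∀ Y : Fin m → ℚ,
        ((D.map fun z : ℤ => (z : ℚ)).mulVec Y) i = (D i j : ℚ) * Y j := by
      intro Y
      show ∑ k, (D.map fun z : ℤ => (z : ℚ)) i k * Y k = _
      refine Finset.sum_eq_single j (fun k _ hkj => ?_) (by simp)
      simp [Matrix.map_apply, hk k hkj]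
    rcases hj with hj | hj
    · left; intro Y; rw [key, hj]; push_cast; ring
    · right; intro Y; rw [key, hj]; push_cast; ring

/-- `E (Y, Z) = 0 ↔ (A - BD) Y = 0 ∧ Z = -DY`. -/
private lemma key_iff {n m : ℕ} (A B : Matrix (Fin n) (Fin m) ℤ)
    (C D : Matrix (Fin m) (Fin m) ℤ) (hC : IsUnit C.det) (Y Z : Fin m → ℚ) :
    (blockE A B C D).mulVec (Sum.elim Y Z) = 0 ↔
      ((redM A B D).mulVec Y = 0 ∧ Z = -((D.map fun z : ℤ => (z : ℚ)).mulVec Y)) := by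
  set f := Int.castRingHom ℚ
  set A' := A.map fun z : ℤ => (z : ℚ)
  set B' := B.map fun z : ℤ => (z : ℚ)
  set C' := C.map fun z : ℤ => (z : ℚ)
  set D' := D.map fun z : ℤ => (z : ℚ)
  have hCD : (C * D).map (fun z : ℤ => (z : ℚ)) = C' * D' :=
    Matrix.map_mul (f := f)
  have hBD : (B * D).map (fun z : ℤ => (z : ℚ)) = B' * D' :=
    Matrix.map_mul (f := f)
  have hE : (blockE A B C D).mulVec (Sum.elim Y Z) =
      Sum.elim (A'.mulVec Y + B'.mulVec Z) (C'.mulVec (D'.mulVec Y + Z)) := by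
    rw [blockE, Matrix.fromBlocks_map, hCD, Matrix.fromBlocks_mulVec]
    simp [Matrix.mulVec_add, Matrix.mulVec_mulVec]
    rfl
  have hC' : IsUnit C'.det := by
    have : C'.det = ((C.det : ℤ) : ℚ) := (RingHom.map_det f C).symm
    rw [this]
    exact hC.map f
  haveI := Matrix.invertibleOfIsUnitDet C' hC'
  have hCinj : ∀ w : Fin m → ℚ, C'.mulVec w = 0 → w = 0 := by
    intro w hw
    have h2 : (⅟C').mulVec (C'.mulVec w) = 0 := by rw [hw, Matrix.mulVec_zero]
    rwa [Matrix.mulVec_mulVec, invOf_mul_self, Matrix.one_mulVec] at h2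
  constructor
  · intro h
    rw [hE] at h
    have h1 : A'.mulVec Y + B'.mulVec Z = 0 := by
      funext j; exact congrFun h (Sum.inl j)
    have h2 : C'.mulVec (D'.mulVec Y + Z) = 0 := by
      funext i; exact congrFun h (Sum.inr i)
    have hz : Z = -(D'.mulVec Y) := eq_neg_of_add_eq_zero_right (hCinj _ h2)
    refine ⟨?_, hz⟩
    rw [hz] at h1
    rw [redM, Matrix.map_sub _ (fun a b => by push_cast; ring), Matrix.sub_mulVec, hBD, ← Matrix.mulVec_mulVec]
    rw [Matrix.mulVec_neg] at h1
    rw [sub_eq_add_neg]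
    exact h1
  · rintro ⟨h1, rfl⟩
    rw [hE]
    have e1 : A'.mulVec Y + B'.mulVec (-(D'.mulVec Y)) = 0 := by
      rw [Matrix.mulVec_neg, Matrix.mulVec_mulVec]
      rw [redM, Matrix.map_sub _ (fun a b => by push_cast; ring), Matrix.sub_mulVec, hBD] at h1
      rw [← sub_eq_add_neg]
      exact h1
    have e2 : C'.mulVec (D'.mulVec Y + -(D'.mulVec Y)) = 0 := by
      rw [add_neg_cancel, Matrix.mulVec_zero]
    rw [e1, e2]
    funext k; cases k <;> rfl

private lemma Dsupp {m : ℕ} (D : Matrix (Fin m) (Fin m) ℤ)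
    (hD : ∀ i : Fin m, (∀ j, D i j = 0) ∨
      ∃ j, (D i j = 1 ∨ D i j = -1) ∧ ∀ k, k ≠ j → D i k = 0)
    {Y₁ Y₂ : Fin m → ℚ} (hsub : ∀ j, Y₁ j ≠ 0 → Y₂ j ≠ 0) (i : Fin m)
    (h : ((D.map fun z : ℤ => (z : ℚ)).mulVec Y₁) i ≠ 0) :
    ((D.map fun z : ℤ => (z : ℚ)).mulVec Y₂) i ≠ 0 := by
  rcases Dapply D hD i with h0 | ⟨j, hj | hj⟩
  · exact absurd (h0 Y₁) h
  · rw [hj Y₁] at h; rw [hj Y₂]; exact hsub j h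
  · rw [hj Y₁, neg_ne_zero] at h; rw [hj Y₂, neg_ne_zero]; exact hsub j h

/-- The computations in the proof of Proposition 3.6: for `X = (Y, Z) ∈ ℚ^{2m}`,
`EX = 0` iff `(A - BD)Y = 0` and `Z = -DY`; moreover (given `EX = 0`) `X` is an
elementary integral vector of the null space of `E` iff `Y` is an elementary integral
vector of the null space of `A - BD`, and in that case the entries of `X` lie in
`{-1,0,1}` iff the entries of `Y` do. -/
theorem blockE_nullspace {n m : ℕ} (A B : Matrix (Fin n) (Fin m) ℤ)
    (C D : Matrix (Fin m) (Fin m) ℤ) (hC : IsUnit C.det)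
    (hD : ∀ i : Fin m, (∀ j, D i j = 0) ∨
      ∃ j, (D i j = 1 ∨ D i j = -1) ∧ ∀ k, k ≠ j → D i k = 0)
    (Y Z : Fin m → ℚ) :
    ((blockE A B C D).mulVec (Sum.elim Y Z) = 0 ↔
      ((redM A B D).mulVec Y = 0 ∧ Z = -((D.map fun z : ℤ => (z : ℚ)).mulVec Y))) ∧
    ((blockE A B C D).mulVec (Sum.elim Y Z) = 0 →
      (IsElemIntVec {x | (blockE A B C D).mulVec x = 0} (Sum.elim Y Z) ↔
        IsElemIntVec {y | (redM A B D).mulVec y = 0} Y)) ∧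
    (IsElemIntVec {x | (blockE A B C D).mulVec x = 0} (Sum.elim Y Z) →
      ((∀ k, Sum.elim Y Z k = -1 ∨ Sum.elim Y Z k = 0 ∨ Sum.elim Y Z k = 1) ↔
        (∀ j, Y j = -1 ∨ Y j = 0 ∨ Y j = 1))) := by
  set D' := D.map fun z : ℤ => (z : ℚ) with hD'def
  refine ⟨key_iff A B C D hC Y Z, ?_, ?_⟩
  · intro h0
    obtain ⟨hY0, hZ0⟩ := (key_iff A B C D hC Y Z).mp h0
    constructor
    · rintro ⟨hmem, hne, hmin, c, hc, hgcd⟩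
      refine ⟨hY0, ?_, ?_, ?_⟩
      · intro hY
        apply hne
        have hz : Z = 0 := by rw [hZ0, hY, Matrix.mulVec_zero, neg_zero]
        rw [hY, hz]
        funext k; cases k <;> rfl
      · intro y hy hyne hysub
        have hx : (blockE A B C D).mulVec (Sum.elim y (-(D'.mulVec y))) = 0 :=
          (key_iff A B C D hC y (-(D'.mulVec y))).mpr ⟨hy, rfl⟩
        have hxne : Sum.elim y (-(D'.mulVec y)) ≠ 0 := by
          intro h
          apply hyne; funext j; exact congrFun h (Sum.inl j)
        have hsub' : {k | Sum.elim y (-(D'.mulVec y)) k ≠ 0} ⊆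
            {k | Sum.elim Y Z k ≠ 0} := by
          rintro (j | i) hk
          · exact hysub hk
          · simp only [Set.mem_setOf_eq, Sum.elim_inr] at hk ⊢
            rw [hZ0]
            simp only [Pi.neg_apply, neg_ne_zero] at hk ⊢
            exact Dsupp D hD (fun j hj => hysub hj) i hk
        have hEq := hmin _ hx hxne hsub'
        ext j
        simpa using Set.ext_iff.mp hEq (Sum.inl j)
      · refine ⟨fun j => c (Sum.inl j), fun j => hc (Sum.inl j), ?_⟩
        apply gcd1
        rw [← hgcd]
        refine Finset.dvd_gcd ?_
        rintro (j | i) -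
        · exact Finset.gcd_dvd (Finset.mem_univ j)
        · rcases Dapply D hD i with h | ⟨j, hj | hj⟩
          · have h1 : (c (Sum.inr i) : ℚ) = 0 := by
              rw [hc (Sum.inr i)]
              show Z i = 0
              rw [hZ0]
              simp [h Y]
            have h2 : c (Sum.inr i) = 0 := by exact_mod_cast h1
            rw [h2]; exact dvd_zero _
          · have h1 : (c (Sum.inr i) : ℚ) = -(c (Sum.inl j) : ℚ) := by
              rw [hc (Sum.inr i), hc (Sum.inl j)]
              show Z i = -(Y j)
              rw [hZ0]
              simp [hj Y]
            have h2 : c (Sum.inr i) = -c (Sum.inl j) := by exact_mod_cast h1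
            rw [h2]
            exact Dvd.dvd.neg_right (Finset.gcd_dvd (Finset.mem_univ j))
          · have h1 : (c (Sum.inr i) : ℚ) = (c (Sum.inl j) : ℚ) := by
              rw [hc (Sum.inr i), hc (Sum.inl j)]
              show Z i = Y j
              rw [hZ0]
              simp [hj Y]
            have h2 : c (Sum.inr i) = c (Sum.inl j) := by exact_mod_cast h1
            rw [h2]
            exact Finset.gcd_dvd (Finset.mem_univ j)
    · rintro ⟨hmem, hne, hmin, c, hc, hgcd⟩
      refine ⟨h0, ?_, ?_, ?_⟩
      · intro h
        apply hne; funext j; exact congrFun h (Sum.inl j)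
      · intro x hx hxne hxsub
        have hxe : Sum.elim (x ∘ Sum.inl) (x ∘ Sum.inr) = x := Sum.elim_comp_inl_inr x
        have hx' : (blockE A B C D).mulVec (Sum.elim (x ∘ Sum.inl) (x ∘ Sum.inr)) = 0 := by
          rw [hxe]; exact hx
        obtain ⟨hy', hz'⟩ := (key_iff A B C D hC _ _).mp hx'
        have hyne : (x ∘ Sum.inl) ≠ 0 := by
          intro h
          apply hxne
          funext k
          cases k with
          | inl j => exact congrFun h j
          | inr i =>
            have := congrFun hz' i
            rw [h, Matrix.mulVec_zero, neg_zero] at this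
            exact this
        have hysub : {j | (x ∘ Sum.inl) j ≠ 0} ⊆ {j | Y j ≠ 0} := by
          intro j hj
          exact hxsub (show x (Sum.inl j) ≠ 0 from hj)
        have hyY := hmin _ hy' hyne hysub
        ext k
        cases k with
        | inl j =>
          simpa using Set.ext_iff.mp hyY j
        | inr i =>
          simp only [Set.mem_setOf_eq, Sum.elim_inr]
          have e1 : x (Sum.inr i) = -(D'.mulVec (x ∘ Sum.inl)) i := congrFun hz' i
          have e2 : Z i = -(D'.mulVec Y) i := congrFun hZ0 i
          rw [e1, e2, neg_ne_zero, neg_ne_zero]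
          constructor
          · exact Dsupp D hD (fun j hj => (Set.ext_iff.mp hyY j).mp hj) i
          · exact Dsupp D hD (fun j hj => (Set.ext_iff.mp hyY j).mpr hj) i
      · refine ⟨Sum.elim c (fun i => -(D.mulVec c i)), ?_, ?_⟩
        · intro k
          cases k with
          | inl j => exact hc j
          | inr i =>
            show ((-(D.mulVec c i) : ℤ) : ℚ) = Z i
            have hcast : ((D.mulVec c i : ℤ) : ℚ) = (D'.mulVec Y) i := by
              show ((∑ j, D i j * c j : ℤ) : ℚ) = ∑ j, D' i j * Y j
              push_cast
              exact Finset.sum_congr rfl fun j _ => by rw [hc j]; rfl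
            rw [hZ0]
            push_cast
            rw [hcast]
            simp
            rfl
        · apply gcd1
          rw [← hgcd]
          exact Finset.dvd_gcd fun j _ => Finset.gcd_dvd (Finset.mem_univ (Sum.inl j))
  · intro hX
    obtain ⟨hY0, hZ0⟩ := (key_iff A B C D hC Y Z).mp hX.1
    constructor
    · intro h j
      exact h (Sum.inl j)
    · intro h k
      cases k with
      | inl j => exact h j
      | inr i =>
        show Z i = -1 ∨ Z i = 0 ∨ Z i = 1
        rw [hZ0]
        rcases Dapply D hD i with h0 | ⟨j, hj | hj⟩
        · simp [h0 Y]
        · simp only [Pi.neg_apply, hj Y]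
          rcases h j with h' | h' | h' <;> rw [h'] <;> norm_num
        · simp only [Pi.neg_apply, hj Y]
          rcases h j with h' | h' | h' <;> rw [h'] <;> norm_num
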